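/- arXiv:2209.15028 — 2 statements merged into one kernel-verified Lean document; each statement's English description precedes it below -/
import Mathlib

section
/- Let S ⊆ S^{k-1} be a Borel set of full standard spherical measure. Then there exist finitely many directions θ(1), …, θ(F) ∈ S such that |x|² ≤ 2 max_{i=1,…,F} |θ(i)ᵀ x|² for all x ∈ ℝᵏ. -/
open MeasureTheory ProbabilityTheory Metric Filter
open scoped ENNReal NNReal RealInnerProductSpace Topology

noncomputable section

/-- Euclidean space `ℝᵏ`. -/
abbrev Eucl (k : ℕ) := EuclideanSpace ℝ (Fin k)

/-- A measure belongs to `P₂` if it is a Borel probability measure with finite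
second moment. -/
def MemP2 {E : Type*} [NormedAddCommGroup E] [MeasurableSpace E] (μ : Measure E) : Prop :=
  IsProbabilityMeasure μ ∧ ∫⁻ x, (‖x‖₊ : ℝ≥0∞) ^ 2 ∂μ < ∞

/-- The set of couplings of `μ` and `ν`. -/
def couplings {E : Type*} [MeasurableSpace E] (μ ν : Measure E) : Set (Measure (E × E)) :=
  {π | π.map Prod.fst = μ ∧ π.map Prod.snd = ν}

/-- Squared 2-Wasserstein distance (with cost `½|x-y|²`), valued in `ℝ≥0∞`. -/
noncomputable def W2sq {E : Type*} [NormedAddCommGroup E] [MeasurableSpace E]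
    (μ ν : Measure E) : ℝ≥0∞ :=
  ⨅ (π : Measure (E × E)) (_ : π ∈ couplings μ ν),
    ∫⁻ p, ENNReal.ofReal (‖p.1 - p.2‖ ^ 2 / 2) ∂π

/-- The 2-Wasserstein distance. -/
noncomputable def W2 {E : Type*} [NormedAddCommGroup E] [MeasurableSpace E]
    (μ ν : Measure E) : ℝ :=
  Real.sqrt (W2sq μ ν).toReal

/-- The projection `μ_θ = P_θ ♯ μ` of a measure on `ℝᵏ` to `ℝ`, `P_θ(x) = θᵀ x`. -/
noncomputable def projM {k : ℕ} (θ : Eucl k) (μ : Measure (Eucl k)) : Measure ℝ :=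
  μ.map fun x => ⟪θ, x⟫

/-- The standard (uniform, normalized) spherical measure on the unit sphere `S^{k-1}`. -/
noncomputable def sphM (k : ℕ) : Measure (sphere (0 : Eucl k) 1) :=
  ((volume : Measure (Eucl k)).toSphere Set.univ)⁻¹ • (volume : Measure (Eucl k)).toSphere

/-- Squared sliced Wasserstein distance. -/
noncomputable def SW2sq {k : ℕ} (μ ν : Measure (Eucl k)) : ℝ≥0∞ :=
  ∫⁻ θ : sphere (0 : Eucl k) 1, W2sq (projM (θ : Eucl k) μ) (projM (θ : Eucl k) ν) ∂(sphM k)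

/-- Sliced Wasserstein distance. -/
noncomputable def SW2 {k : ℕ} (μ ν : Measure (Eucl k)) : ℝ :=
  Real.sqrt (SW2sq μ ν).toReal

/-- One-dimensional centered Gaussian with variance `σ²` (Dirac mass at `0` if `σ = 0`). -/
noncomputable def gauss1 (σ : ℝ) : Measure ℝ := gaussianReal 0 (Real.toNNReal (σ ^ 2))

/-- Centered Gaussian on `ℝᵏ` with covariance `σ² Iₖ`. -/
noncomputable def gaussK (k : ℕ) (σ : ℝ) : Measure (Eucl k) :=
  (Measure.pi fun _ : Fin k => gauss1 σ).map (MeasurableEquiv.toLp 2 (Fin k → ℝ))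

/-- Gaussian regularization `μ^σ = μ ∗ N_σ`. -/
noncomputable def greg {k : ℕ} (σ : ℝ) (μ : Measure (Eucl k)) : Measure (Eucl k) :=
  μ.conv (gaussK k σ)

/-- Squared Gaussian-regularized sliced Wasserstein distance. -/
noncomputable def SW2sqσ {k : ℕ} (σ : ℝ) (μ ν : Measure (Eucl k)) : ℝ≥0∞ :=
  SW2sq (greg σ μ) (greg σ ν)

/-- Gaussian regularized sliced Wasserstein distance `SW₂^σ`. -/
noncomputable def SW2σ {k : ℕ} (σ : ℝ) (μ ν : Measure (Eucl k)) : ℝ :=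
  Real.sqrt (SW2sqσ σ μ ν).toReal

/-- Quantile function (generalized inverse cumulative distribution function). -/
noncomputable def qf (ρ : Measure ℝ) (p : ℝ) : ℝ := sInf {y | p ≤ cdf ρ y}

/-- The one-dimensional monotone (optimal) transport map `T = F_β⁻¹ ∘ F_α` from `α` to `β`. -/
noncomputable def Tmap (α β : Measure ℝ) (x : ℝ) : ℝ := qf β (cdf α x)

/-- The monotone transport map `T^σ_θ` from `μ^σ_θ` to `ν^σ_θ`. -/
noncomputable def Tσθ {k : ℕ} (σ : ℝ) (θ : Eucl k) (μ ν : Measure (Eucl k)) : ℝ → ℝ :=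
  Tmap (projM θ (greg σ μ)) (projM θ (greg σ ν))

/-- The space `P₂(ℝᵏ)` of probability measures with finite second moment. -/
def P2 (k : ℕ) : Type := {μ : Measure (Eucl k) // MemP2 μ}

/-- The canonical atomless probability space used for liftings: `ℝ` with the
standard Gaussian measure. -/
noncomputable def PP : Measure ℝ := gaussianReal 0 1

/-- `u : P₂(ℝᵏ) → ℝ` is `L`-differentiable at `μ` with `L`-derivative `g : ℝᵏ → ℝᵏ`
if its lifting `U(X) := u(law X)` to the `L²` space of an atomless probability space is
Fréchet differentiable at some `X` with law `μ`, with derivative `Y ↦ E[⟪g(X), Y⟫]`. -/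
def HasLDerivAt (k : ℕ) (u : Measure (Eucl k) → ℝ) (μ : Measure (Eucl k))
    (g : Eucl k → Eucl k) : Prop :=
  ∃ X : Lp (Eucl k) 2 PP, Measure.map X PP = μ ∧
    ∃ D : Lp (Eucl k) 2 PP →L[ℝ] ℝ,
      (∀ Y : Lp (Eucl k) 2 PP, D Y = ∫ ω, ⟪g (X ω), Y ω⟫ ∂PP) ∧
      HasFDerivAt (fun Y : Lp (Eucl k) 2 PP => u (Measure.map Y PP)) D X

/-- The `L`-derivative `D_μ SW₂^σ(μ,ν)²(x) = ∫_{S^{k-1}} θ (θᵀx − E[T^σ_θ(θᵀ(x+N_σ))]) dθ`. -/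
noncomputable def DSW (k : ℕ) (σ : ℝ) (μ ν : Measure (Eucl k)) (x : Eucl k) : Eucl k :=
  ∫ θ : sphere (0 : Eucl k) 1,
    ((⟪(θ : Eucl k), x⟫ -
        ∫ z : Eucl k, Tσθ σ (θ : Eucl k) μ ν ⟪(θ : Eucl k), x + z⟫ ∂(gaussK k σ)) •
      (θ : Eucl k)) ∂(sphM k)

/-- The mixed second derivative
`D²_{xμ} SW₂^σ(μ,ν)²(x) = E ∫_{S^{k-1}} θθᵀ (1 − (T^σ_θ)'(θᵀ(x+N_σ))) dθ`, applied to a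
vector `v`. -/
noncomputable def DSW2 (k : ℕ) (σ : ℝ) (μ ν : Measure (Eucl k)) (x v : Eucl k) : Eucl k :=
  ∫ z : Eucl k,
    (∫ θ : sphere (0 : Eucl k) 1,
      (((1 - deriv (Tσθ σ (θ : Eucl k) μ ν) ⟪(θ : Eucl k), x + z⟫) * ⟪(θ : Eucl k), v⟫) •
        (θ : Eucl k)) ∂(sphM k)) ∂(gaussK k σ)

/-- The gauge-type function `ρ_σ((s,μ),(t,ν)) = |t−s|² + SW₂^σ(μ,ν)²`. -/
noncomputable def gaugeρ {k : ℕ} (σ : ℝ) (p q : ℝ × Measure (Eucl k)) : ℝ :=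
  |q.1 - p.1| ^ 2 + (SW2sqσ σ p.2 q.2).toReal

/-- The smooth perturbation `φ_δ(t,μ) = ∑ₙ 2⁻ⁿ ρ_{1/δ}((t,μ),(tₙ,μₙ))`. -/
noncomputable def phiδ {k : ℕ} (δ : ℝ) (seq : ℕ → ℝ × Measure (Eucl k))
    (p : ℝ × Measure (Eucl k)) : ℝ :=
  ∑' n : ℕ, ((2 : ℝ) ^ n)⁻¹ * gaugeρ (1 / δ) p (seq n)

open scoped Pointwise

/-- From any Borel subset of the sphere of full spherical measure, one can
choose finitely many directions `θ(1), …, θ(F)` with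
`|x|² ≤ 2 maxᵢ |θ(i)ᵀx|²` for all `x ∈ ℝᵏ`. -/
theorem statement5 (k : ℕ) (S : Set (sphere (0 : Eucl k) 1)) (hS : MeasurableSet S)
    (hfull : sphM k Sᶜ = 0) :
    ∃ (F : ℕ) (θ : Fin F → sphere (0 : Eucl k) 1), (∀ i, θ i ∈ S) ∧
      ∀ x : Eucl k, ‖x‖ ^ 2 ≤ 2 * ⨆ i, |⟪(θ i : Eucl k), x⟫| ^ 2 := by
  classical
  have key : ∀ x : sphere (0 : Eucl k) 1, ∃ θ ∈ S,
      (3/4 : ℝ) < ⟪(θ : Eucl k), (x : Eucl k)⟫ ^ 2 := by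
    intro x
    by_contra h
    push_neg at h
    set U : Set (sphere (0 : Eucl k) 1) :=
      {θ | (3/4 : ℝ) < ⟪(θ : Eucl k), (x : Eucl k)⟫ ^ 2} with hUdef
    have hUopen : IsOpen U := by
      have hc : Continuous fun θ : sphere (0 : Eucl k) 1 =>
          ⟪(θ : Eucl k), (x : Eucl k)⟫ ^ 2 :=
        (continuous_subtype_val.inner continuous_const).pow 2
      exact isOpen_lt continuous_const hc
    have hUS : U ⊆ Sᶜ := fun θ hθ hθS => absurd (h θ hθS) (not_le.2 hθ)
    have hU0 : sphM k U = 0 := measure_mono_null hUS hfull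
    have hfin : (volume : Measure (Eucl k)).toSphere Set.univ ≠ ∞ := measure_ne_top _ _
    have hU0' : (volume : Measure (Eucl k)).toSphere U = 0 := by
      rw [sphM, Measure.smul_apply, smul_eq_mul] at hU0
      rcases mul_eq_zero.1 hU0 with h1 | h2
      · exact absurd (ENNReal.inv_eq_zero.1 h1) hfin
      · exact h2
    have hk : k ≠ 0 := by
      rintro rfl
      have hx := x.2
      rw [Subsingleton.elim (x : Eucl 0) 0] at hx
      simp at hx
    -- The open cone
    set W : Set (Eucl k) :=
      {y : Eucl k | ‖y‖ < 1 ∧ (3/4 : ℝ) * ‖y‖ ^ 2 < ⟪y, (x : Eucl k)⟫ ^ 2} with hWdef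
    have hWopen : IsOpen W := by
      apply IsOpen.inter
      · exact isOpen_lt continuous_norm continuous_const
      · have hci : Continuous fun y : Eucl k => ⟪y, (x : Eucl k)⟫ :=
          Continuous.inner continuous_id continuous_const
        exact isOpen_lt (continuous_const.mul (continuous_norm.pow 2)) (hci.pow 2)
    have hy₀ : ((1/2 : ℝ) • (x : Eucl k)) ∈ W := by
      have hx1 : ‖(x : Eucl k)‖ = 1 := by
        have := x.2; rwa [mem_sphere_zero_iff_norm] at this
      constructor
      · rw [norm_smul, hx1]; norm_num
      · rw [norm_smul, hx1, real_inner_smul_left, real_inner_self_eq_norm_sq, hx1]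
        norm_num
    have hWsub : W ⊆ Set.Ioo (0:ℝ) 1 • (Subtype.val '' U : Set (Eucl k)) := by
      rintro y ⟨hy1, hy2⟩
      have hy0 : y ≠ 0 := by
        rintro rfl; simp at hy2
      have hny : 0 < ‖y‖ := norm_pos_iff.2 hy0
      have hθnorm : ‖(‖y‖⁻¹ • y)‖ = 1 := by
        rw [norm_smul, norm_inv, norm_norm, inv_mul_cancel₀ hny.ne']
      have hyy : y = ‖y‖ • (‖y‖⁻¹ • y) := by
        rw [smul_smul, mul_inv_cancel₀ hny.ne', one_smul]
      rw [hyy]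
      refine Set.smul_mem_smul ⟨hny, hy1⟩ ?_
      refine ⟨⟨‖y‖⁻¹ • y, mem_sphere_zero_iff_norm.2 hθnorm⟩, ?_, rfl⟩
      · show (3/4 : ℝ) < ⟪‖y‖⁻¹ • y, (x : Eucl k)⟫ ^ 2
        rw [real_inner_smul_left]
        have h2 : (‖y‖⁻¹ * ⟪y, (x : Eucl k)⟫) ^ 2 * ‖y‖ ^ 2 = ⟪y, (x : Eucl k)⟫ ^ 2 := by
          field_simp
        have h3 : (3/4 : ℝ) * ‖y‖ ^ 2 < (‖y‖⁻¹ * ⟪y, (x : Eucl k)⟫) ^ 2 * ‖y‖ ^ 2 := by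
          rw [h2]; exact hy2
        exact lt_of_mul_lt_mul_right h3 (sq_nonneg ‖y‖)
    have hWpos : (0 : ℝ≥0∞) < volume W := hWopen.measure_pos volume ⟨_, hy₀⟩
    have happ := (volume : Measure (Eucl k)).toSphere_apply' hUopen.measurableSet
    rw [hU0'] at happ
    rcases mul_eq_zero.1 happ.symm with h1 | h2
    · have : Module.finrank ℝ (Eucl k) = k := finrank_euclideanSpace_fin
      rw [this] at h1
      exact hk (by exact_mod_cast h1)
    · exact absurd (measure_mono_null hWsub h2) hWpos.ne'
  choose θf hθfS hθf using key
  set V : sphere (0 : Eucl k) 1 → Set (sphere (0 : Eucl k) 1) :=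
    fun x => {y | (3/4:ℝ) < ⟪(θf x : Eucl k), (y : Eucl k)⟫ ^ 2} with hVdef
  have hVopen : ∀ x, IsOpen (V x) := fun x =>
    isOpen_lt continuous_const ((continuous_const.inner continuous_subtype_val).pow 2)
  have hmem : ∀ x, x ∈ V x := fun x => hθf x
  obtain ⟨t, ht⟩ := isCompact_univ.elim_finite_subcover V hVopen
    (fun y _ => Set.mem_iUnion.2 ⟨y, hmem y⟩)
  refine ⟨t.card, fun i => θf (t.equivFin.symm i : _), fun i => hθfS _, ?_⟩
  intro x
  have hsupnn : (0:ℝ) ≤ ⨆ i : Fin t.card, |⟪(θf (t.equivFin.symm i : _) : Eucl k), x⟫| ^ 2 :=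
    Real.iSup_nonneg fun i => by positivity
  rcases eq_or_ne x 0 with rfl | hx0
  · rw [norm_zero]; nlinarith [hsupnn]
  · have hnx : 0 < ‖x‖ := norm_pos_iff.2 hx0
    have hu : ‖(‖x‖⁻¹ • x)‖ = 1 := by
      rw [norm_smul, norm_inv, norm_norm, inv_mul_cancel₀ hnx.ne']
    set u : sphere (0 : Eucl k) 1 := ⟨‖x‖⁻¹ • x, mem_sphere_zero_iff_norm.2 hu⟩ with hudef
    have := ht (Set.mem_univ u)
    rw [Set.mem_iUnion₂] at this
    obtain ⟨c, hc, hcV⟩ := this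
    have hcV' : (3/4 : ℝ) < ⟪(θf c : Eucl k), ‖x‖⁻¹ • x⟫ ^ 2 := hcV
    rw [real_inner_smul_right] at hcV'
    have hkey : (3/4 : ℝ) * ‖x‖ ^ 2 < ⟪(θf c : Eucl k), x⟫ ^ 2 := by
      have h2 : (‖x‖⁻¹ * ⟪(θf c : Eucl k), x⟫) ^ 2 * ‖x‖ ^ 2 = ⟪(θf c : Eucl k), x⟫ ^ 2 := by
        field_simp
      calc (3/4 : ℝ) * ‖x‖ ^ 2
          < (‖x‖⁻¹ * ⟪(θf c : Eucl k), x⟫) ^ 2 * ‖x‖ ^ 2 :=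
            mul_lt_mul_of_pos_right hcV' (by positivity)
        _ = ⟪(θf c : Eucl k), x⟫ ^ 2 := h2
    set i₀ : Fin t.card := t.equivFin ⟨c, hc⟩ with hi₀
    have hterm : ⟪(θf c : Eucl k), x⟫ ^ 2
        = |⟪(θf (t.equivFin.symm i₀ : _) : Eucl k), x⟫| ^ 2 := by
      rw [hi₀, Equiv.symm_apply_apply, sq_abs]
    have hle : |⟪(θf (t.equivFin.symm i₀ : _) : Eucl k), x⟫| ^ 2
        ≤ ⨆ i : Fin t.card, |⟪(θf (t.equivFin.symm i : _) : Eucl k), x⟫| ^ 2 :=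
      le_ciSup (f := fun i : Fin t.card => |⟪(θf (t.equivFin.symm i : _) : Eucl k), x⟫| ^ 2)
        (Set.Finite.bddAbove (Set.finite_range _)) i₀
    nlinarith [sq_nonneg ‖x‖]
end
end

section
/- There exists a constant C (depending only on k) such that for all μ, ν ∈ P₂(ℝᵏ), κ ∫ |y|² ν(dy) ≤ C ( ∫ |x|² μ(dx) + SW₂(μ,ν)² ), where κ ∈ (0,1] is the constant with ∫_{S^{k-1}} θθᵀ dθ = κ I_k. -/
open MeasureTheory ProbabilityTheory Metric Filter
open scoped ENNReal NNReal RealInnerProductSpace Topology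

noncomputable section

lemma sphM_univ_le_one (k : ℕ) : sphM k Set.univ ≤ 1 := by
  unfold sphM
  rw [Measure.smul_apply, smul_eq_mul]
  rcases eq_or_ne ((volume : Measure (Eucl k)).toSphere Set.univ) 0 with h | h
  · simp [h]
  rcases eq_or_ne ((volume : Measure (Eucl k)).toSphere Set.univ) ∞ with h' | h'
  · simp [h']
  · rw [ENNReal.inv_mul_cancel h h']

lemma isFiniteMeasure_sphM (k : ℕ) : IsFiniteMeasure (sphM k) :=
  ⟨lt_of_le_of_lt (sphM_univ_le_one k) ENNReal.one_lt_top⟩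

lemma meas_inner {k : ℕ} (θ : Eucl k) : Measurable fun x : Eucl k => (⟪θ, x⟫ : ℝ) :=
  (continuous_const.inner continuous_id).measurable

lemma meas_sq : Measurable fun t : ℝ => ENNReal.ofReal (t ^ 2) :=
  (measurable_id.pow_const 2).ennreal_ofReal

lemma L_proj {k : ℕ} (θ : Eucl k) (ρ : Measure (Eucl k)) :
    ∫⁻ t, ENNReal.ofReal (t ^ 2) ∂(projM θ ρ)
      = ∫⁻ x, ENNReal.ofReal ((⟪θ, x⟫ : ℝ) ^ 2) ∂ρ := by
  unfold projM
  rw [lintegral_map meas_sq (meas_inner θ)]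

lemma bound_proj {k : ℕ} (θ : sphere (0 : Eucl k) 1) (ρ : Measure (Eucl k)) :
    ∫⁻ x, ENNReal.ofReal ((⟪(θ : Eucl k), x⟫ : ℝ) ^ 2) ∂ρ
      ≤ ∫⁻ x, ENNReal.ofReal (‖x‖ ^ 2) ∂ρ := by
  refine lintegral_mono fun x => ENNReal.ofReal_le_ofReal ?_
  have h1 : |(⟪(θ : Eucl k), x⟫ : ℝ)| ≤ ‖(θ : Eucl k)‖ * ‖x‖ := abs_real_inner_le_norm _ _
  have h2 : ‖(θ : Eucl k)‖ = 1 := norm_eq_of_mem_sphere θ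
  rw [h2, one_mul] at h1
  nlinarith [abs_nonneg (⟪(θ : Eucl k), x⟫ : ℝ), sq_abs (⟪(θ : Eucl k), x⟫ : ℝ), norm_nonneg x]

lemma isProb_projM {k : ℕ} (θ : Eucl k) (ρ : Measure (Eucl k)) [IsProbabilityMeasure ρ] :
    IsProbabilityMeasure (projM θ ρ) :=
  Measure.isProbabilityMeasure_map (meas_inner θ).aemeasurable

lemma lint_fst {E : Type*} [MeasurableSpace E] {α β : Measure E} {π : Measure (E × E)}
    (hπ : π ∈ couplings α β) {f : E → ℝ≥0∞} (hf : Measurable f) :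
    ∫⁻ p, f p.1 ∂π = ∫⁻ s, f s ∂α := by
  rw [← hπ.1, lintegral_map hf measurable_fst]

lemma lint_snd {E : Type*} [MeasurableSpace E] {α β : Measure E} {π : Measure (E × E)}
    (hπ : π ∈ couplings α β) {f : E → ℝ≥0∞} (hf : Measurable f) :
    ∫⁻ p, f p.2 ∂π = ∫⁻ s, f s ∂β := by
  rw [← hπ.2, lintegral_map hf measurable_snd]

lemma prod_mem_couplings (α β : Measure ℝ) [IsProbabilityMeasure α] [IsProbabilityMeasure β] :
    α.prod β ∈ couplings α β := by
  constructor
  · rw [Measure.map_fst_prod]; simp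
  · rw [Measure.map_snd_prod]; simp

lemma meas_cost : Measurable fun p : ℝ × ℝ => ENNReal.ofReal (‖p.1 - p.2‖ ^ 2 / 2) :=
  ((((measurable_fst.sub measurable_snd).norm).pow_const 2).div_const 2).ennreal_ofReal

lemma W2sq_le_moments (α β : Measure ℝ) [IsProbabilityMeasure α] [IsProbabilityMeasure β] :
    W2sq α β ≤ (∫⁻ s, ENNReal.ofReal (s ^ 2) ∂α) + ∫⁻ t, ENNReal.ofReal (t ^ 2) ∂β := by
  have hmem := prod_mem_couplings α β
  have h1 : W2sq α β ≤ ∫⁻ p, ENNReal.ofReal (‖p.1 - p.2‖ ^ 2 / 2) ∂(α.prod β) :=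
    iInf₂_le _ hmem
  refine h1.trans ?_
  have hpt : ∀ p : ℝ × ℝ, ENNReal.ofReal (‖p.1 - p.2‖ ^ 2 / 2)
      ≤ ENNReal.ofReal (p.1 ^ 2) + ENNReal.ofReal (p.2 ^ 2) := by
    intro p
    rw [← ENNReal.ofReal_add (sq_nonneg _) (sq_nonneg _)]
    refine ENNReal.ofReal_le_ofReal ?_
    rw [Real.norm_eq_abs, sq_abs]
    nlinarith [sq_nonneg (p.1 + p.2)]
  calc ∫⁻ p, ENNReal.ofReal (‖p.1 - p.2‖ ^ 2 / 2) ∂(α.prod β)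
      ≤ ∫⁻ p : ℝ × ℝ, (ENNReal.ofReal (p.1 ^ 2) + ENNReal.ofReal (p.2 ^ 2)) ∂(α.prod β) :=
        lintegral_mono hpt
    _ = (∫⁻ p : ℝ × ℝ, ENNReal.ofReal (p.1 ^ 2) ∂(α.prod β))
        + ∫⁻ p : ℝ × ℝ, ENNReal.ofReal (p.2 ^ 2) ∂(α.prod β) :=
        lintegral_add_left (show Measurable fun p : ℝ × ℝ => ENNReal.ofReal (p.1 ^ 2) from
          meas_sq.comp measurable_fst) _
    _ = _ := by rw [lint_fst hmem meas_sq, lint_snd hmem meas_sq]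

lemma key_coupling (α β : Measure ℝ) [IsProbabilityMeasure α] [IsProbabilityMeasure β] :
    ∫⁻ t, ENNReal.ofReal (t ^ 2) ∂β
      ≤ 2 * (∫⁻ s, ENNReal.ofReal (s ^ 2) ∂α) + 4 * W2sq α β := by
  set A := ∫⁻ t, ENNReal.ofReal (t ^ 2) ∂β with hA
  set B := 2 * ∫⁻ s, ENNReal.ofReal (s ^ 2) ∂α with hB
  have hcost : ∀ π ∈ couplings α β,
      A ≤ B + 4 * ∫⁻ p, ENNReal.ofReal (‖p.1 - p.2‖ ^ 2 / 2) ∂π := by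
    intro π hπ
    have h2 : A = ∫⁻ p, ENNReal.ofReal (p.2 ^ 2) ∂π := (lint_snd hπ meas_sq).symm
    have h1 : B = 2 * ∫⁻ p, ENNReal.ofReal (p.1 ^ 2) ∂π := by
      rw [lint_fst hπ meas_sq]
    rw [h2, h1]
    have hpt : ∀ p : ℝ × ℝ, ENNReal.ofReal (p.2 ^ 2)
        ≤ 2 * ENNReal.ofReal (p.1 ^ 2) + 4 * ENNReal.ofReal (‖p.1 - p.2‖ ^ 2 / 2) := by
      intro p
      have e2 : (2 : ℝ≥0∞) * ENNReal.ofReal (p.1 ^ 2) = ENNReal.ofReal (2 * p.1 ^ 2) := by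
        rw [ENNReal.ofReal_mul (by norm_num)]; norm_num
      have e4 : (4 : ℝ≥0∞) * ENNReal.ofReal (‖p.1 - p.2‖ ^ 2 / 2)
          = ENNReal.ofReal (4 * (‖p.1 - p.2‖ ^ 2 / 2)) := by
        rw [ENNReal.ofReal_mul (by norm_num)]; norm_num
      rw [e2, e4, ← ENNReal.ofReal_add (by positivity) (by positivity)]
      refine ENNReal.ofReal_le_ofReal ?_
      rw [Real.norm_eq_abs, sq_abs]
      nlinarith [sq_nonneg (p.1 + (p.1 - p.2))]
    calc ∫⁻ p, ENNReal.ofReal (p.2 ^ 2) ∂π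
        ≤ ∫⁻ p : ℝ × ℝ, (2 * ENNReal.ofReal (p.1 ^ 2)
            + 4 * ENNReal.ofReal (‖p.1 - p.2‖ ^ 2 / 2)) ∂π := lintegral_mono hpt
      _ = 2 * (∫⁻ p : ℝ × ℝ, ENNReal.ofReal (p.1 ^ 2) ∂π)
            + 4 * ∫⁻ p, ENNReal.ofReal (‖p.1 - p.2‖ ^ 2 / 2) ∂π := by
          have hm1 : Measurable fun p : ℝ × ℝ => ENNReal.ofReal (p.1 ^ 2) :=
            meas_sq.comp measurable_fst
          rw [lintegral_add_left (hm1.const_mul 2) _,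
            lintegral_const_mul 2 hm1,
            lintegral_const_mul 4 meas_cost]
  rcases eq_or_ne (W2sq α β) ∞ with hW | hW
  · rw [hW]
    simp [ENNReal.mul_top]
  · refine ENNReal.le_of_forall_pos_le_add fun ε hε hlt => ?_
    have hε4 : ((ε : ℝ≥0∞) / 4) ≠ 0 := by
      simp [ENNReal.div_eq_zero_iff, hε.ne']
    have hWlt : W2sq α β < W2sq α β + (ε : ℝ≥0∞) / 4 :=
      ENNReal.lt_add_right hW hε4
    rw [W2sq] at hWlt
    obtain ⟨π, hπlt⟩ := iInf_lt_iff.mp hWlt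
    have hmem : π ∈ couplings α β := by
      by_contra hm
      simp [hm] at hπlt
    rw [iInf_pos hmem] at hπlt
    calc A ≤ B + 4 * ∫⁻ p, ENNReal.ofReal (‖p.1 - p.2‖ ^ 2 / 2) ∂π := hcost π hmem
      _ ≤ B + 4 * (W2sq α β + (ε : ℝ≥0∞) / 4) := by
          gcongr
          exact hπlt.le
      _ = B + 4 * W2sq α β + (ε : ℝ≥0∞) := by
          rw [mul_add, ENNReal.mul_div_cancel' (by norm_num) (by norm_num), add_assoc]

lemma cont_inner_sph (k : ℕ) :
    Continuous fun p : sphere (0 : Eucl k) 1 × Eucl k => (⟪(p.1 : Eucl k), p.2⟫ : ℝ) :=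
  (continuous_subtype_val.comp continuous_fst).inner continuous_snd

lemma sph_eq {k : ℕ} (κ : ℝ) (hκ0 : 0 ≤ κ)
    (hκ : ∀ x y : Eucl k,
      (∫ θ : sphere (0 : Eucl k) 1, ⟪(θ : Eucl k), x⟫ * ⟪(θ : Eucl k), y⟫ ∂(sphM k)) =
        κ * ⟪x, y⟫) (y : Eucl k) :
    ∫⁻ θ : sphere (0 : Eucl k) 1, ENNReal.ofReal ((⟪(θ : Eucl k), y⟫ : ℝ) ^ 2) ∂(sphM k)
      = ENNReal.ofReal κ * ENNReal.ofReal (‖y‖ ^ 2) := by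
  haveI := isFiniteMeasure_sphM k
  have hcont : Continuous fun θ : sphere (0 : Eucl k) 1 => ((⟪(θ : Eucl k), y⟫ : ℝ) ^ 2) :=
    (continuous_subtype_val.inner continuous_const).pow 2
  have hint : Integrable (fun θ : sphere (0 : Eucl k) 1 => ((⟪(θ : Eucl k), y⟫ : ℝ) ^ 2))
      (sphM k) := by
    refine (integrable_const (‖y‖ ^ 2)).mono' hcont.aestronglyMeasurable
      (Filter.Eventually.of_forall fun θ => ?_)
    rw [Real.norm_eq_abs, abs_of_nonneg (sq_nonneg _)]
    have h1 : |(⟪(θ : Eucl k), y⟫ : ℝ)| ≤ ‖(θ : Eucl k)‖ * ‖y‖ := abs_real_inner_le_norm _ _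
    have h2 : ‖(θ : Eucl k)‖ = 1 := norm_eq_of_mem_sphere θ
    rw [h2, one_mul] at h1
    nlinarith [abs_nonneg (⟪(θ : Eucl k), y⟫ : ℝ), sq_abs (⟪(θ : Eucl k), y⟫ : ℝ)]
  rw [← ofReal_integral_eq_lintegral_ofReal hint
    (Filter.Eventually.of_forall fun θ => sq_nonneg _)]
  have : (∫ θ : sphere (0 : Eucl k) 1, ((⟪(θ : Eucl k), y⟫ : ℝ) ^ 2) ∂(sphM k))
      = κ * ‖y‖ ^ 2 := by
    have h := hκ y y
    rw [real_inner_self_eq_norm_sq] at h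
    rw [← h]
    congr 1
    ext θ
    ring
  rw [this, ENNReal.ofReal_mul hκ0]

lemma swap_sph {k : ℕ} (κ : ℝ) (hκ0 : 0 ≤ κ)
    (hκ : ∀ x y : Eucl k,
      (∫ θ : sphere (0 : Eucl k) 1, ⟪(θ : Eucl k), x⟫ * ⟪(θ : Eucl k), y⟫ ∂(sphM k)) =
        κ * ⟪x, y⟫) (ρ : Measure (Eucl k)) [IsProbabilityMeasure ρ] :
    ∫⁻ θ : sphere (0 : Eucl k) 1,
        (∫⁻ x, ENNReal.ofReal ((⟪(θ : Eucl k), x⟫ : ℝ) ^ 2) ∂ρ) ∂(sphM k)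
      = ENNReal.ofReal κ * ∫⁻ x, ENNReal.ofReal (‖x‖ ^ 2) ∂ρ := by
  haveI := isFiniteMeasure_sphM k
  have hmeas : Measurable (Function.uncurry fun (θ : sphere (0 : Eucl k) 1) (x : Eucl k) =>
      ENNReal.ofReal ((⟪(θ : Eucl k), x⟫ : ℝ) ^ 2)) :=
    (((cont_inner_sph k).pow 2).measurable).ennreal_ofReal
  rw [lintegral_lintegral_swap hmeas.aemeasurable]
  simp_rw [sph_eq κ hκ0 hκ]
  rw [lintegral_const_mul' _ _ ENNReal.ofReal_ne_top]

lemma SW2sq_le_moments {k : ℕ} (μ ν : Measure (Eucl k)) [IsProbabilityMeasure μ]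
    [IsProbabilityMeasure ν] :
    SW2sq μ ν ≤ (∫⁻ x, ENNReal.ofReal (‖x‖ ^ 2) ∂μ) + ∫⁻ y, ENNReal.ofReal (‖y‖ ^ 2) ∂ν := by
  set M := (∫⁻ x, ENNReal.ofReal (‖x‖ ^ 2) ∂μ) + ∫⁻ y, ENNReal.ofReal (‖y‖ ^ 2) ∂ν with hM
  calc SW2sq μ ν ≤ ∫⁻ _ : sphere (0 : Eucl k) 1, M ∂(sphM k) := by
        refine lintegral_mono fun θ => ?_
        haveI := isProb_projM (θ : Eucl k) μ
        haveI := isProb_projM (θ : Eucl k) ν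
        refine (W2sq_le_moments _ _).trans ?_
        rw [L_proj, L_proj]
        exact add_le_add (bound_proj θ μ) (bound_proj θ ν)
    _ = M * sphM k Set.univ := lintegral_const M
    _ ≤ M * 1 := mul_le_mul_right (sphM_univ_le_one k) M
    _ = M := mul_one M

lemma moment_eq {k : ℕ} (ρ : Measure (Eucl k)) :
    ∫⁻ x, ((‖x‖₊ : ℝ≥0∞)) ^ 2 ∂ρ = ∫⁻ x, ENNReal.ofReal (‖x‖ ^ 2) ∂ρ := by
  congr 1
  ext x
  rw [ENNReal.ofReal_pow (norm_nonneg x), ← coe_nnnorm x, ENNReal.ofReal_coe_nnreal]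

lemma toReal_moment {k : ℕ} (ρ : Measure (Eucl k)) :
    (∫⁻ x, ENNReal.ofReal (‖x‖ ^ 2) ∂ρ).toReal = ∫ x, ‖x‖ ^ 2 ∂ρ := by
  rw [integral_eq_lintegral_of_nonneg_ae (Filter.Eventually.of_forall fun x => sq_nonneg _)
    ((continuous_norm.pow 2).aestronglyMeasurable)]

/-- `κ ∫ |y|² ν(dy) ≤ C (∫ |x|² μ(dx) + SW₂(μ,ν)²)` for a constant `C`
depending only on `k`, where `κ` is the constant with `∫_{S^{k-1}} θθᵀ dθ = κ Iₖ`. -/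
theorem statement8 (k : ℕ) (κ : ℝ) (hκ0 : 0 < κ) (hκ1 : κ ≤ 1)
    (hκ : ∀ x y : Eucl k,
      (∫ θ : sphere (0 : Eucl k) 1, ⟪(θ : Eucl k), x⟫ * ⟪(θ : Eucl k), y⟫ ∂(sphM k)) =
        κ * ⟪x, y⟫) :
    ∃ C : ℝ, 0 < C ∧ ∀ μ ν : Measure (Eucl k), MemP2 μ → MemP2 ν →
      κ * ∫ y, ‖y‖ ^ 2 ∂ν ≤ C * ((∫ x, ‖x‖ ^ 2 ∂μ) + (SW2sq μ ν).toReal) := by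
  refine ⟨4, by norm_num, fun μ ν hμ hν => ?_⟩
  haveI := hμ.1
  haveI := hν.1
  haveI := isFiniteMeasure_sphM k
  set Iμ := ∫⁻ x, ENNReal.ofReal (‖x‖ ^ 2) ∂μ with hIμdef
  set Iν := ∫⁻ y, ENNReal.ofReal (‖y‖ ^ 2) ∂ν with hIνdef
  have hIμ : Iμ ≠ ∞ := by rw [hIμdef, ← moment_eq]; exact hμ.2.ne
  have hIν : Iν ≠ ∞ := by rw [hIνdef, ← moment_eq]; exact hν.2.ne
  have hSW : SW2sq μ ν ≠ ∞ :=
    ((SW2sq_le_moments μ ν).trans_lt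
      (by rw [← hIμdef, ← hIνdef]; exact ENNReal.add_lt_top.mpr ⟨hIμ.lt_top, hIν.lt_top⟩)).ne
  have main : ENNReal.ofReal κ * Iν ≤ 2 * Iμ + 4 * SW2sq μ ν := by
    rw [← swap_sph κ hκ0.le hκ ν]
    have hmeasH : Measurable fun θ : sphere (0 : Eucl k) 1 =>
        ∫⁻ x, ENNReal.ofReal ((⟪(θ : Eucl k), x⟫ : ℝ) ^ 2) ∂μ :=
      Measurable.lintegral_prod_right
        ((((cont_inner_sph k).pow 2).measurable).ennreal_ofReal)
    calc ∫⁻ θ : sphere (0 : Eucl k) 1,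
          (∫⁻ y, ENNReal.ofReal ((⟪(θ : Eucl k), y⟫ : ℝ) ^ 2) ∂ν) ∂(sphM k)
        ≤ ∫⁻ θ : sphere (0 : Eucl k) 1,
            (2 * (∫⁻ x, ENNReal.ofReal ((⟪(θ : Eucl k), x⟫ : ℝ) ^ 2) ∂μ)
              + 4 * W2sq (projM (θ : Eucl k) μ) (projM (θ : Eucl k) ν)) ∂(sphM k) := by
          refine lintegral_mono fun θ => ?_
          haveI := isProb_projM (θ : Eucl k) μ
          haveI := isProb_projM (θ : Eucl k) ν
          have h := key_coupling (projM (θ : Eucl k) μ) (projM (θ : Eucl k) ν)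
          rw [L_proj, L_proj] at h
          exact h
      _ = 2 * (∫⁻ θ : sphere (0 : Eucl k) 1,
            (∫⁻ x, ENNReal.ofReal ((⟪(θ : Eucl k), x⟫ : ℝ) ^ 2) ∂μ) ∂(sphM k))
            + 4 * SW2sq μ ν := by
          rw [lintegral_add_left (hmeasH.const_mul 2), lintegral_const_mul 2 hmeasH,
            lintegral_const_mul' 4 _ (by norm_num)]
          rfl
      _ ≤ 2 * Iμ + 4 * SW2sq μ ν := by
          gcongr
          rw [swap_sph κ hκ0.le hκ μ, ← hIμdef]
          calc ENNReal.ofReal κ * Iμ ≤ 1 * Iμ :=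
                mul_le_mul_left (ENNReal.ofReal_le_one.mpr hκ1) Iμ
            _ = Iμ := one_mul Iμ
  have main2 : ENNReal.ofReal κ * Iν ≤ 4 * (Iμ + SW2sq μ ν) := by
    refine main.trans ?_
    rw [mul_add]
    gcongr
    norm_num
  have hfin : (4 : ℝ≥0∞) * (Iμ + SW2sq μ ν) ≠ ∞ := by
    refine ENNReal.mul_ne_top (by norm_num) ?_
    exact ENNReal.add_ne_top.mpr ⟨hIμ, hSW⟩
  have hreal := ENNReal.toReal_mono hfin main2
  rw [ENNReal.toReal_mul, ENNReal.toReal_ofReal hκ0.le, ENNReal.toReal_mul,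
    ENNReal.toReal_add hIμ hSW] at hreal
  rw [hIνdef, toReal_moment] at hreal
  rw [hIμdef, toReal_moment] at hreal
  simpa using hreal

end
end
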